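/- Let α ∈ ℝ be irrational and let β ∈ ℝ. Then there exists a constant t > 0 such that for infinitely many n ∈ ℕ there is an integer m with |nα − m − β| < t/n. -/

import Mathlib

lemma exists_den_gt (ξ : ℝ) (hξ : Irrational ξ) (N : ℕ) :
    ∃ q : ℚ, |ξ - (q : ℝ)| < 1 / (q.den : ℝ) ^ 2 ∧ N < q.den := by
  by_contra hcon
  push_neg at hcon
  have hS := Real.infinite_rat_abs_sub_lt_one_div_den_sq_of_irrational hξ
  set M : ℤ := ⌈(|ξ| + 1) * N⌉ with hM
  apply hS
  have hfin : (Set.Icc (-M) M ×ˢ Set.Icc 1 N).Finite :=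
    (Set.finite_Icc _ _).prod (Set.finite_Icc _ _)
  refine Set.Finite.subset (hfin.image fun z : ℤ × ℕ => (z.1 : ℚ) / (z.2 : ℚ)) ?_
  intro q hq
  have hq' : |ξ - (q : ℝ)| < 1 / (q.den : ℝ) ^ 2 := hq
  have hden1 : 1 ≤ q.den := q.pos
  have hdenN : q.den ≤ N := hcon q hq'
  have hden0 : (0 : ℝ) < (q.den : ℝ) := by positivity
  have hle1 : (1 : ℝ) / (q.den : ℝ) ^ 2 ≤ 1 := by
    rw [div_le_one (by positivity)]
    have : (1 : ℝ) ≤ (q.den : ℝ) := by exact_mod_cast hden1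
    nlinarith
  have habsq : |(q : ℝ)| ≤ |ξ| + 1 := by
    have := abs_sub_abs_le_abs_sub (q : ℝ) ξ
    rw [abs_sub_comm] at this
    linarith [hq'.le.trans hle1]
  have hnum : |(q.num : ℝ)| ≤ (|ξ| + 1) * N := by
    have h1 : |(q.num : ℝ)| = |(q : ℝ)| * q.den := by
      rw [Rat.cast_def, abs_div, abs_of_pos hden0, div_mul_cancel₀ _ hden0.ne']
    rw [h1]
    have hNc : (q.den : ℝ) ≤ N := by exact_mod_cast hdenN
    have h0 : (0 : ℝ) ≤ |ξ| + 1 := by positivity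
    nlinarith [abs_nonneg (q : ℝ)]
  have hnumM : |q.num| ≤ M := by
    have : ((|q.num| : ℤ) : ℝ) ≤ (M : ℝ) := by
      push_cast
      exact hnum.trans (Int.le_ceil _)
    exact_mod_cast this
  refine ⟨(q.num, q.den), ⟨⟨?_, ?_⟩, ⟨hden1, hdenN⟩⟩, ?_⟩
  · linarith [neg_abs_le q.num, hnumM]
  · linarith [le_abs_self q.num, hnumM]
  · exact Rat.num_div_den q

/-- for α irrational and β real there is a constant t > 0 such that for
infinitely many positive integers n there is an integer m with |nα − m − β| < t/n. -/
theorem inhomogeneous_dirichlet (α β : ℝ) (hirr : Irrational α) :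
    ∃ t : ℝ, 0 < t ∧
      {n : ℕ | 0 < n ∧ ∃ m : ℤ, |(n : ℝ) * α - m - β| < t / n}.Infinite := by
  refine ⟨5, by norm_num, ?_⟩
  apply Set.infinite_of_not_bddAbove
  rintro ⟨B, hB⟩
  obtain ⟨q, hq, hden⟩ := exists_den_gt α hirr (B + 1)
  set d : ℕ := q.den with hd
  set p : ℤ := q.num with hp
  have hd0 : 0 < d := q.pos
  have hdZ : (0 : ℤ) < (d : ℤ) := by exact_mod_cast hd0
  have hdR : (0 : ℝ) < (d : ℝ) := by exact_mod_cast hd0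
  have hcop : IsCoprime p (d : ℤ) := by
    rw [Int.isCoprime_iff_gcd_eq_one]
    simpa [Int.gcd] using q.reduced
  obtain ⟨x, y, hxy⟩ := hcop
  set b : ℤ := round ((d : ℝ) * β) with hb
  have hbr : |(d : ℝ) * β - (b : ℝ)| ≤ 1 / 2 := abs_sub_round _
  set nZ : ℤ := b * x % (d : ℤ) + d with hnZ
  have h1 : (d : ℤ) ≤ nZ := le_add_of_nonneg_left (Int.emod_nonneg _ hdZ.ne')
  have h2 : nZ < 2 * d := by
    have := Int.emod_lt_of_pos (b * x) hdZ
    omega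
  set m : ℤ := -(b * y) - b * x / (d : ℤ) * p + p with hm
  have key : nZ * p = b + (d : ℤ) * m := by
    have hemod : b * x % (d : ℤ) = b * x - (d : ℤ) * (b * x / (d : ℤ)) := Int.emod_def _ _
    rw [hnZ, hm, hemod]
    linear_combination b * hxy
  set n : ℕ := nZ.toNat with hn
  have hnn : (n : ℤ) = nZ := Int.toNat_of_nonneg (by linarith)
  have hnd : d ≤ n ∧ n < 2 * d := by omega
  have hnpos : 0 < n := lt_of_lt_of_le hd0 hnd.1
  have hnR : (0 : ℝ) < (n : ℝ) := by exact_mod_cast hnpos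
  have hndR : (n : ℝ) < 2 * (d : ℝ) := by exact_mod_cast hnd.2
  have hcast : (n : ℝ) * (q : ℝ) = (b : ℝ) / (d : ℝ) + (m : ℝ) := by
    have hZ : (n : ℤ) * p = b + (d : ℤ) * m := by rw [hnn]; exact key
    have hR : (n : ℝ) * (p : ℝ) = (b : ℝ) + (d : ℝ) * (m : ℝ) := by exact_mod_cast hZ
    rw [Rat.cast_def, ← hp, ← hd]
    field_simp
    linarith [hR]
  have e1 : (n : ℝ) * α - (m : ℝ) - β = (n : ℝ) * (α - (q : ℝ)) + ((b : ℝ) / d - β) := by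
    linear_combination hcast
  have hA : |(n : ℝ) * (α - (q : ℝ))| < (n : ℝ) / (d : ℝ) ^ 2 := by
    rw [abs_mul, abs_of_pos hnR, div_eq_mul_inv, ← one_div]
    exact mul_lt_mul_of_pos_left hq hnR
  have hB2 : |(b : ℝ) / d - β| ≤ 1 / (2 * d) := by
    have h3 : (b : ℝ) / d - β = -(((d : ℝ) * β - b) / d) := by field_simp; ring
    rw [h3, abs_neg, abs_div, abs_of_pos hdR]
    rw [div_le_div_iff₀ hdR (by positivity)]
    nlinarith [hbr]
  have hfinal : |(n : ℝ) * α - (m : ℝ) - β| < 5 / (n : ℝ) := by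
    rw [e1]
    have habs := abs_add_le ((n : ℝ) * (α - (q : ℝ))) ((b : ℝ) / d - β)
    have hlt : (n : ℝ) / (d : ℝ) ^ 2 + 1 / (2 * d) < 5 / (n : ℝ) := by
      rw [div_add_div _ _ (by positivity) (by positivity), div_lt_div_iff₀ (by positivity) hnR]
      nlinarith [mul_pos hdR (mul_pos (sub_pos.mpr hndR) (by linarith : (0:ℝ) < 2 * d + n)),
        mul_pos (mul_pos hdR hnR) (sub_pos.mpr hndR), mul_pos hdR hnR]
    linarith
  have hmem : n ∈ {n : ℕ | 0 < n ∧ ∃ m : ℤ, |(n : ℝ) * α - m - β| < 5 / n} :=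
    ⟨hnpos, m, hfinal⟩
  have := hB hmem
  omega
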